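/- For every rational t with t ∉ {-1, 0, 1}, the rationals a = 18t(t-1)(t+1)/((t^2-6t+1)(t^2+6t+1)), b = (t-1)(t^2+6t+1)^2/(6t(t+1)(t^2-6t+1)), c = (t+1)(t^2-6t+1)^2/(6t(t-1)(t^2+6t+1)) satisfy the identity -a^4b^2c^2 + 2a^3b^3c^2 + 2a^3b^2c^3 - a^2b^4c^2 + 2a^2b^3c^3 - a^2b^2c^4 + 12a^2b^2c^2 + 6a^2bc + 6ab^2c + 6abc^2 + 4ab + 4ac + 4bc + 3 = 0. -/

import Mathlib

set_option maxHeartbeats 1000000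

lemma rat_sq_ne_two (q : ℚ) : q^2 ≠ 2 := by
  intro h
  have h2 : ¬ IsSquare (2:ℚ) := by
    have := irrational_sqrt_two
    rw [show (2:ℝ) = ((2:ℚ):ℝ) by norm_num, irrational_sqrt_ratCast_iff] at this
    exact this.1
  exact h2 ⟨q, by rw [← h]; ring⟩

theorem parametric_triple_order3_condition (t : ℚ)
    (ht : t ≠ -1 ∧ t ≠ 0 ∧ t ≠ 1)
    (a b c : ℚ)
    (hA : a = 18*t*(t-1)*(t+1) / ((t^2-6*t+1)*(t^2+6*t+1)))
    (hB : b = (t-1)*(t^2+6*t+1)^2 / (6*t*(t+1)*(t^2-6*t+1)))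
    (hC : c = (t+1)*(t^2-6*t+1)^2 / (6*t*(t-1)*(t^2+6*t+1))) :
    -a^4*b^2*c^2 + 2*a^3*b^3*c^2 + 2*a^3*b^2*c^3 - a^2*b^4*c^2 + 2*a^2*b^3*c^3
      - a^2*b^2*c^4 + 12*a^2*b^2*c^2 + 6*a^2*b*c + 6*a*b^2*c + 6*a*b*c^2
      + 4*a*b + 4*a*c + 4*b*c + 3 = 0 := by
  obtain ⟨h1, h0, h1'⟩ := ht
  have d1 : t^2 - 6*t + 1 ≠ 0 := fun h => rat_sq_ne_two ((t-3)/2) (by linear_combination h/4)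
  have d2 : t^2 + 6*t + 1 ≠ 0 := fun h => rat_sq_ne_two ((t+3)/2) (by linear_combination h/4)
  have hm1 : t + 1 ≠ 0 := fun h => h1 (by linarith)
  have hp1 : t - 1 ≠ 0 := fun h => h1' (by linarith)
  have hu : a*b = 3*(t-1)^2*(t^2+6*t+1)/(t^2-6*t+1)^2 := by
    rw [hA, hB]; field_simp; ring
  have hv : a*c = 3*(t+1)^2*(t^2-6*t+1)/(t^2+6*t+1)^2 := by
    rw [hA, hC]; field_simp; ring
  have hw : b*c = (t^2-6*t+1)*(t^2+6*t+1)/(36*t^2) := by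
    rw [hB, hC]; field_simp; ring
  rw [show -a^4*b^2*c^2 + 2*a^3*b^3*c^2 + 2*a^3*b^2*c^3 - a^2*b^4*c^2 + 2*a^2*b^3*c^3
      - a^2*b^2*c^4 + 12*a^2*b^2*c^2 + 6*a^2*b*c + 6*a*b^2*c + 6*a*b*c^2
      + 4*a*b + 4*a*c + 4*b*c + 3
      = -(a*b)^2*(a*c)^2 + 2*(a*b)^2*(a*c)*(b*c) + 2*(a*b)*(a*c)^2*(b*c)
        - (a*b)^2*(b*c)^2 + 2*(a*b)*(a*c)*(b*c)^2 - (a*c)^2*(b*c)^2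
        + 12*(a*b)*(a*c)*(b*c) + 6*(a*b)*(a*c) + 6*(a*b)*(b*c) + 6*(a*c)*(b*c)
        + 4*(a*b) + 4*(a*c) + 4*(b*c) + 3 from by ring, hu, hv, hw]
  have d1' : t*(t-6)+1 ≠ 0 := by convert d1 using 1; ring
  have d2' : t*(t+6)+1 ≠ 0 := by convert d2 using 1; ring
  field_simp
  ring
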